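/- Let p be a prime, θ ∈ ℝ nonzero, x ∈ ℤ_p invertible with digits (x_j) and x^{-1} with digits (y_j). For s_1 = j_1/p^{k_1}, s_4 = j_4/p^{k_4} ∈ ℤ[1/p], one has exp(2πi (Σ_{j=0}^{k_1+k_4−1} y_j p^j) s_1 s_4) = exp(2πi {x^{-1} s_1 s_4}_p), where {·}_p denotes the p-adic fractional part. -/

import Mathlib

/-- `q` is the p-adic fractional part of `a`: it is a rational in `ℤ[1/p] ∩ [0,1)`
with `a - q` a p-adic integer. -/
def IsPadicFracPart (p : ℕ) [Fact p.Prime] (a : ℚ_[p]) (q : ℚ) : Prop :=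
  0 ≤ q ∧ q < 1 ∧ (∃ j : ℤ, ∃ k : ℕ, q = (j : ℚ) / (p : ℚ) ^ k) ∧
    ‖a - (q : ℚ_[p])‖ ≤ 1

theorem exp_partial_sum_eq_exp_fracPart' (p : ℕ) [Fact p.Prime]
    (y : ℤ_[p])
    (yd : ℕ → ℕ) (hyd : ∀ j, yd j < p)
    (hey : y = ∑' j : ℕ, (yd j : ℤ_[p]) * (p : ℤ_[p]) ^ j)
    (j₁ j₄ : ℤ) (k₁ k₄ : ℕ) (s₁ s₄ : ℚ)
    (hs₁ : s₁ = (j₁ : ℚ) / (p : ℚ) ^ k₁) (hs₄ : s₄ = (j₄ : ℚ) / (p : ℚ) ^ k₄)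
    (q : ℚ) (j : ℤ) (k : ℕ) (hqk : q = (j : ℚ) / (p : ℚ) ^ k)
    (hqnorm : ‖(y : ℚ_[p]) * (s₁ : ℚ_[p]) * (s₄ : ℚ_[p]) - (q : ℚ_[p])‖ ≤ 1) :
    Complex.exp (2 * Real.pi * Complex.I *
        ((∑ j ∈ Finset.range (k₁ + k₄), (yd j : ℂ) * (p : ℂ) ^ j) * (s₁ : ℂ) * (s₄ : ℂ)))
      = Complex.exp (2 * Real.pi * Complex.I * (q : ℂ)) := by
  have hp1 : (1:ℕ) < p := (Fact.out : p.Prime).one_lt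
  have hpR : (1:ℝ) < (p:ℝ) := by exact_mod_cast hp1
  have hpQ : ((p:ℚ)) ≠ 0 := by positivity
  set K := k₁ + k₄ with hK
  set N : ℕ := ∑ i ∈ Finset.range K, yd i * p ^ i with hN
  -- summability
  have hsummable : ∀ g : ℕ → ℤ_[p], Summable (fun i : ℕ => g i * (p : ℤ_[p]) ^ i) := by
    intro g
    apply Summable.of_norm
    apply Summable.of_nonneg_of_le (fun i => norm_nonneg _) (fun i => ?_)
      (summable_geometric_of_lt_one (by positivity)
        (inv_lt_one_of_one_lt₀ hpR : (p:ℝ)⁻¹ < 1))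
    calc ‖g i * (p : ℤ_[p]) ^ i‖ ≤ 1 * ‖(p : ℤ_[p]) ^ i‖ := by
          rw [norm_mul]
          exact mul_le_mul_of_nonneg_right (PadicInt.norm_le_one _) (norm_nonneg _)
      _ = (p:ℝ)⁻¹ ^ i := by
          rw [one_mul, PadicInt.norm_p_pow, inv_pow, ← zpow_natCast, ← zpow_neg]
  have hf : Summable (fun i : ℕ => (yd i : ℤ_[p]) * (p : ℤ_[p]) ^ i) := hsummable _
  -- tail bound
  have htail : ‖y - (N : ℤ_[p])‖ ≤ (p:ℝ) ^ (-(K:ℤ)) := by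
    have hsum := Summable.sum_add_tsum_nat_add (f := fun i : ℕ => (yd i : ℤ_[p]) * (p : ℤ_[p]) ^ i) K hf
    have hNc : (N : ℤ_[p]) = ∑ i ∈ Finset.range K, (yd i : ℤ_[p]) * (p : ℤ_[p]) ^ i := by
      rw [hN]; push_cast; exact Finset.sum_congr rfl fun i _ => by ring
    have : y - (N : ℤ_[p]) = (p : ℤ_[p]) ^ K * ∑' i : ℕ, (yd (i + K) : ℤ_[p]) * (p : ℤ_[p]) ^ i := by
      rw [hey, ← hsum, hNc, add_sub_cancel_left,
        ← Summable.tsum_mul_left ((p : ℤ_[p]) ^ K) (hsummable (fun i => (yd (i + K) : ℤ_[p])))]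
      exact tsum_congr fun i => by simp only [pow_add]; ring
    rw [this, norm_mul, PadicInt.norm_p_pow]
    calc (p:ℝ) ^ (-(K:ℤ)) * ‖∑' i : ℕ, (yd (i + K) : ℤ_[p]) * (p : ℤ_[p]) ^ i‖
        ≤ (p:ℝ) ^ (-(K:ℤ)) * 1 :=
          mul_le_mul_of_nonneg_left (PadicInt.norm_le_one _) (by positivity)
      _ = (p:ℝ) ^ (-(K:ℤ)) := mul_one _
  -- norm of s₁, s₄ in ℚ_p
  have hns : ∀ (jj : ℤ) (kk : ℕ) (s : ℚ), s = (jj : ℚ) / (p:ℚ) ^ kk →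
      ‖(s : ℚ_[p])‖ ≤ (p:ℝ) ^ (kk:ℤ) := by
    intro jj kk s hs
    have : (s : ℚ_[p]) = (jj : ℚ_[p]) / (p : ℚ_[p]) ^ kk := by
      rw [hs]; push_cast; ring
    rw [this, norm_div, Padic.norm_p_pow]
    calc ‖(jj : ℚ_[p])‖ / (p:ℝ) ^ (-(kk:ℤ)) ≤ 1 / (p:ℝ) ^ (-(kk:ℤ)) := by
          exact div_le_div_of_nonneg_right (Padic.norm_int_le_one _) (by positivity)
      _ = (p:ℝ) ^ (kk:ℤ) := by rw [one_div, ← zpow_neg, neg_neg]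
  -- norms in ℚ_p
  have hyN : ‖(y : ℚ_[p]) - (N : ℚ_[p])‖ ≤ (p:ℝ) ^ (-(K:ℤ)) := by
    have : (y : ℚ_[p]) - (N : ℚ_[p]) = ((y - (N : ℤ_[p]) : ℤ_[p]) : ℚ_[p]) := by push_cast; ring
    rw [this, ← PadicInt.norm_def]
    exact htail
  have h1 : ‖((y : ℚ_[p]) - (N : ℚ_[p])) * (s₁ : ℚ_[p]) * (s₄ : ℚ_[p])‖ ≤ 1 := by
    rw [norm_mul, norm_mul]
    calc ‖(y : ℚ_[p]) - (N : ℚ_[p])‖ * ‖(s₁ : ℚ_[p])‖ * ‖(s₄ : ℚ_[p])‖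
        ≤ (p:ℝ) ^ (-(K:ℤ)) * (p:ℝ) ^ (k₁:ℤ) * (p:ℝ) ^ (k₄:ℤ) := by
          gcongr <;> first
            | exact hyN | exact hns j₁ k₁ s₁ hs₁ | exact hns j₄ k₄ s₄ hs₄
            | positivity
      _ = (p:ℝ) ^ (-(K:ℤ) + k₁ + k₄) := by
          rw [← zpow_add₀ (by positivity : (p:ℝ) ≠ 0), ← zpow_add₀ (by positivity : (p:ℝ) ≠ 0)]
      _ = 1 := by
          rw [hK]; norm_num
  have h2 : ‖(N : ℚ_[p]) * (s₁ : ℚ_[p]) * (s₄ : ℚ_[p]) - (q : ℚ_[p])‖ ≤ 1 := by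
    have hdec : (N : ℚ_[p]) * (s₁ : ℚ_[p]) * (s₄ : ℚ_[p]) - (q : ℚ_[p])
        = (((N : ℚ_[p]) - (y : ℚ_[p])) * (s₁ : ℚ_[p]) * (s₄ : ℚ_[p]))
          + ((y : ℚ_[p]) * (s₁ : ℚ_[p]) * (s₄ : ℚ_[p]) - (q : ℚ_[p])) := by ring
    rw [hdec]
    refine le_trans (Padic.nonarchimedean _ _) (max_le ?_ hqnorm)
    calc ‖((N : ℚ_[p]) - (y : ℚ_[p])) * (s₁ : ℚ_[p]) * (s₄ : ℚ_[p])‖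
        = ‖((y : ℚ_[p]) - (N : ℚ_[p])) * (s₁ : ℚ_[p]) * (s₄ : ℚ_[p])‖ := by
          rw [norm_mul, norm_mul, norm_mul, norm_mul, norm_sub_rev]
      _ ≤ 1 := h1
  -- the rational difference is an integer
  set r : ℚ := (N : ℚ) * s₁ * s₄ - q with hr
  have hrnorm : ‖(r : ℚ_[p])‖ ≤ 1 := by
    have : ((r : ℚ) : ℚ_[p]) = (N : ℚ_[p]) * (s₁ : ℚ_[p]) * (s₄ : ℚ_[p]) - (q : ℚ_[p]) := by
      rw [hr]; push_cast; ring
    rw [this]; exact h2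
  set c : ℤ := (N : ℤ) * j₁ * j₄ * (p:ℤ) ^ k - j * (p:ℤ) ^ K with hc
  have hrc : r = (c : ℚ) / (p:ℚ) ^ (K + k) := by
    rw [hr, hc, hs₁, hs₄, hqk, hK]
    field_simp
    push_cast
    ring
  have hcnorm : ‖(c : ℚ_[p])‖ ≤ (p:ℝ) ^ (-((K + k : ℕ)):ℤ) := by
    have hcc : (c : ℚ_[p]) = ((r : ℚ) : ℚ_[p]) * (p : ℚ_[p]) ^ (K + k) := by
      rw [hrc]
      push_cast
      field_simp
      exact (mul_div_cancel_right₀ _ (pow_ne_zero _ (Nat.cast_ne_zero.mpr (by omega)))).symm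
    rw [hcc, norm_mul, Padic.norm_p_pow]
    calc ‖((r : ℚ) : ℚ_[p])‖ * (p:ℝ) ^ (-((K + k : ℕ)):ℤ)
        ≤ 1 * (p:ℝ) ^ (-((K + k : ℕ)):ℤ) :=
          mul_le_mul_of_nonneg_right hrnorm (by positivity)
      _ = _ := one_mul _
  obtain ⟨m, hm⟩ := (Padic.norm_int_le_pow_iff_dvd c (K + k)).mp hcnorm
  have hrm : r = (m : ℚ) := by
    rw [hrc, hm]
    push_cast
    field_simp
  -- conclude
  have hNsum : (∑ i ∈ Finset.range (k₁ + k₄), (yd i : ℂ) * (p : ℂ) ^ i) = (N : ℂ) := by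
    rw [hN, hK]; push_cast; ring
  have hQc : (N : ℚ) * s₁ * s₄ = q + (m : ℚ) := by
    have := hrm; rw [hr] at this; linarith
  have hCc : (N : ℂ) * (s₁ : ℂ) * (s₄ : ℂ) = (q : ℂ) + (m : ℂ) := by
    exact_mod_cast congrArg (fun t : ℚ => (t : ℂ)) hQc
  rw [hNsum, hCc, mul_add, Complex.exp_add]
  rw [show 2 * (Real.pi : ℂ) * Complex.I * (m : ℂ) = (m : ℂ) * (2 * Real.pi * Complex.I) by ring,
    Complex.exp_int_mul_two_pi_mul_I, mul_one]

/-- For invertible `x ∈ ℤ_p` with digits `(x_j)`, inverse `y = x⁻¹` with digits `(y_j)`,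
and `s₁ = j₁/p^{k₁}`, `s₄ = j₄/p^{k₄} ∈ ℤ[1/p]`:
`exp(2πi (Σ_{j<k₁+k₄} y_j p^j) s₁ s₄) = exp(2πi {x⁻¹ s₁ s₄}_p)`. -/
theorem exp_partial_sum_eq_exp_fracPart (p : ℕ) [Fact p.Prime] (θ : ℝ) (hθ : θ ≠ 0)
    (x y : ℤ_[p]) (hx : IsUnit x) (hxy : x * y = 1)
    (xd yd : ℕ → ℕ) (hxd : ∀ j, xd j < p) (hyd : ∀ j, yd j < p)
    (hex : x = ∑' j : ℕ, (xd j : ℤ_[p]) * (p : ℤ_[p]) ^ j)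
    (hey : y = ∑' j : ℕ, (yd j : ℤ_[p]) * (p : ℤ_[p]) ^ j)
    (j₁ j₄ : ℤ) (k₁ k₄ : ℕ) (s₁ s₄ : ℚ)
    (hs₁ : s₁ = (j₁ : ℚ) / (p : ℚ) ^ k₁) (hs₄ : s₄ = (j₄ : ℚ) / (p : ℚ) ^ k₄)
    (q : ℚ)
    (hq : IsPadicFracPart p ((y : ℚ_[p]) * (s₁ : ℚ_[p]) * (s₄ : ℚ_[p])) q) :
    Complex.exp (2 * Real.pi * Complex.I *
        ((∑ j ∈ Finset.range (k₁ + k₄), (yd j : ℂ) * (p : ℂ) ^ j) * (s₁ : ℂ) * (s₄ : ℂ)))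
      = Complex.exp (2 * Real.pi * Complex.I * (q : ℂ)) := by
  obtain ⟨-, -, ⟨j, k, hqk⟩, hqnorm⟩ := hq
  exact exp_partial_sum_eq_exp_fracPart' p y yd hyd hey j₁ j₄ k₁ k₄ s₁ s₄ hs₁ hs₄ q j k hqk hqnorm
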